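/- Let A be a ring and I a two-sided idempotent ideal of A such that {a ∈ A : aI = 0} = 0, A/I is flat as a left A-module, and A/I is a semisimple ring. Then ann_M(I) is a direct summand of M for every right A-module M. -/

import Mathlib

open MulOpposite TensorProduct

variable (A : Type) [Ring A]

/-- `ann_M(I) = {m ∈ M | m·a = 0 for all a ∈ I}` as a submodule of the right `A`-module `M`. -/
def rAnn (I : Ideal A) (M : Type) [AddCommGroup M] [Module Aᵐᵒᵖ M] :
    Submodule Aᵐᵒᵖ M where
  carrier := {m : M | ∀ a ∈ I, op a • m = 0}
  add_mem' := by
    intro x y hx hy a ha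
    rw [smul_add, hx a ha, hy a ha, add_zero]
  zero_mem' := by
    intro a _
    rw [smul_zero]
  smul_mem' := by
    intro c m hm a ha
    rw [smul_smul]
    have h1 : op a * c = op (c.unop * a) := by
      rw [op_mul, op_unop]
    rw [h1]
    exact hm (c.unop * a) (I.mul_mem_left c.unop ha)

section PureTensor

/-- The subgroup of relations of `M ⊗[ℤ] N` whose quotient is the balanced tensor product
`M ⊗[A] N` of a right `A`-module `M` and a left `A`-module `N`. -/
noncomputable def balancedRel (M N : Type) [AddCommGroup M] [Module Aᵐᵒᵖ M]
    [AddCommGroup N] [Module A N] : AddSubgroup (M ⊗[ℤ] N) :=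
  AddSubgroup.closure
    {x : M ⊗[ℤ] N | ∃ (m : M) (a : A) (n : N), x = (op a • m) ⊗ₜ[ℤ] n - m ⊗ₜ[ℤ] (a • n)}

/-- The balanced tensor product `M ⊗[A] N` over the (possibly noncommutative) ring `A`. -/
noncomputable def RTensor (M N : Type) [AddCommGroup M] [Module Aᵐᵒᵖ M]
    [AddCommGroup N] [Module A N] : Type :=
  (M ⊗[ℤ] N) ⧸ balancedRel A M N

noncomputable instance (M N : Type) [AddCommGroup M] [Module Aᵐᵒᵖ M] [AddCommGroup N]
    [Module A N] : AddCommGroup (RTensor A M N) :=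
  inferInstanceAs (AddCommGroup ((M ⊗[ℤ] N) ⧸ balancedRel A M N))

/-- The canonical morphism `M ⊗[A] I ⟶ M ⊗[A] A` induced by the inclusion `I → A`
of a left ideal `I`, for a right `A`-module `M`. -/
noncomputable def pureMap (I : Ideal A) (M : Type) [AddCommGroup M] [Module Aᵐᵒᵖ M] :
    RTensor A M I →+ RTensor A M A :=
  QuotientAddGroup.map (balancedRel A M I) (balancedRel A M A)
    (LinearMap.lTensor M (I.subtype.toAddMonoidHom.toIntLinearMap)).toAddMonoidHom
    (by
      rw [balancedRel, AddSubgroup.closure_le]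
      rintro x ⟨m, a, n, rfl⟩
      simp only [AddSubgroup.coe_comap, Set.mem_preimage, LinearMap.toAddMonoidHom_coe,
        map_sub, LinearMap.lTensor_tmul, AddMonoidHom.coe_toIntLinearMap,
        LinearMap.toAddMonoidHom_coe, Submodule.coe_subtype, SetLike.mem_coe]
      exact AddSubgroup.subset_closure ⟨m, a, (n : A), by rw [Submodule.coe_smul]⟩)

end PureTensor

/-- The ring congruence attached to a two-sided ideal `I` of `A`; its quotient is the
quotient ring `A/I`. -/
def idealCon (I : Ideal A) (hright : ∀ a ∈ I, ∀ b : A, a * b ∈ I) : RingCon A where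
  r a b := a - b ∈ I
  iseqv := by
    refine ⟨fun a => by simpa using I.zero_mem, fun {a b} h => ?_, fun {a b c} h h' => ?_⟩
    · have := I.neg_mem h
      rwa [neg_sub] at this
    · have := I.add_mem h h'
      rwa [sub_add_sub_cancel] at this
  mul' := by
    intro w x y z h h'
    show w * y - x * z ∈ I
    have h1 : (w - x) * y ∈ I := hright _ h y
    have h2 : x * (y - z) ∈ I := by simpa [smul_eq_mul] using I.smul_mem x h'
    have h3 := I.add_mem h1 h2
    have heq : (w - x) * y + x * (y - z) = w * y - x * z := by noncomm_ring
    rwa [heq] at h3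
  add' := by
    intro w x y z h h'
    show w + y - (x + z) ∈ I
    have h3 := I.add_mem h h'
    have heq : w - x + (y - z) = w + y - (x + z) := by abel
    rwa [heq] at h3

set_option maxHeartbeats 2000000 in
/-- Local right units from purity. -/
theorem exists_right_unit (I : Ideal A)
    (hpure : ∀ (M : Type) [AddCommGroup M] [Module Aᵐᵒᵖ M],
      Function.Injective (pureMap A I M))
    {a : A} (ha : a ∈ I) : ∃ e ∈ I, a * e = a := by
  classical
  -- the right ideal aA
  set Ra : Submodule Aᵐᵒᵖ A := Submodule.span Aᵐᵒᵖ {a} with hRa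
  set M : Type := A ⧸ Ra with hM
  -- the additive subgroup aI
  set J : AddSubgroup A :=
    { carrier := {x | ∃ c ∈ I, x = a * c}
      add_mem' := by
        rintro x y ⟨c, hc, rfl⟩ ⟨d, hd, rfl⟩
        exact ⟨c + d, I.add_mem hc hd, by rw [mul_add]⟩
      zero_mem' := ⟨0, I.zero_mem, by rw [mul_zero]⟩
      neg_mem' := by
        rintro x ⟨c, hc, rfl⟩
        exact ⟨-c, I.neg_mem hc, by rw [mul_neg]⟩ } with hJ
  -- the bilinear-ish map  A × I → A ⧸ J,  (b, x) ↦ b * x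
  set f : A →+ (↥I →+ (A ⧸ J)) :=
    { toFun := fun b =>
        { toFun := fun x => QuotientAddGroup.mk (b * (x : A))
          map_zero' := by simp
          map_add' := by intro x y; rw [← QuotientAddGroup.mk_add]; simp [mul_add] }
      map_zero' := by ext x; simp
      map_add' := by intro b b'; ext x; rw [AddMonoidHom.add_apply]; simp [add_mul] } with hf
  have hker : Ra.toAddSubgroup ≤ f.ker := by
    intro b hb
    rw [AddMonoidHom.mem_ker]
    ext x
    obtain ⟨c, rfl⟩ := Submodule.mem_span_singleton.mp hb
    simp only [hf, AddMonoidHom.coe_mk, ZeroHom.coe_mk, AddMonoidHom.zero_apply]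
    rw [QuotientAddGroup.eq_zero_iff]
    refine ⟨c.unop * (x : A), I.mul_mem_left _ x.2, ?_⟩
    show (c • a) * (x : A) = _
    rw [MulOpposite.smul_eq_mul_unop, mul_assoc]
  set g : M →+ (↥I →+ (A ⧸ J)) := QuotientAddGroup.lift Ra.toAddSubgroup f hker with hg
  have hg_mk : ∀ (b : A) (x : ↥I), g (Submodule.Quotient.mk b) x =
      QuotientAddGroup.mk (b * (x : A)) := fun b x => rfl
  have hcomm : ∀ (z : ℤ) (m : M) (n : ↥I), g (z • m) n = g m (z • n) := by
    intro z m n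
    rw [map_zsmul, map_zsmul]
    rfl
  set Φ : (M ⊗[ℤ] ↥I) →+ (A ⧸ J) := TensorProduct.liftAddHom g hcomm with hΦ
  have hΦ_tmul : ∀ (m : M) (x : ↥I), Φ (m ⊗ₜ[ℤ] x) = g m x := fun m x => rfl
  have hker2 : balancedRel A M ↥I ≤ Φ.ker := by
    rw [balancedRel, AddSubgroup.closure_le]
    rintro x ⟨m, r, n, rfl⟩
    obtain ⟨b, rfl⟩ := Submodule.Quotient.mk_surjective Ra m
    simp only [SetLike.mem_coe, AddMonoidHom.mem_ker, map_sub, hΦ_tmul]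
    have h1 : (op r • Submodule.Quotient.mk b : M) = Submodule.Quotient.mk (b * r) := rfl
    rw [h1, hg_mk, hg_mk]
    have h2 : ((r • n : ↥I) : A) = r * (n : A) := rfl
    rw [h2, mul_assoc, sub_self]
  set ψ : RTensor A M ↥I →+ (A ⧸ J) :=
    QuotientAddGroup.lift (balancedRel A M ↥I) Φ hker2 with hψ
  -- the element u = [1] ⊗ a
  set u : RTensor A M ↥I :=
    QuotientAddGroup.mk ((Submodule.Quotient.mk 1 : M) ⊗ₜ[ℤ] (⟨a, ha⟩ : ↥I)) with hu
  have hmap : pureMap A I M u = QuotientAddGroup.mk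
      ((Submodule.Quotient.mk 1 : M) ⊗ₜ[ℤ] (a : A)) := by
    rw [hu]
    refine (QuotientAddGroup.map_mk (balancedRel A M ↥I) (balancedRel A M A)
      (LinearMap.lTensor M (I.subtype.toAddMonoidHom.toIntLinearMap)).toAddMonoidHom _
      ((Submodule.Quotient.mk 1 : M) ⊗ₜ[ℤ] (⟨a, ha⟩ : ↥I))).trans ?_
    congr 1
  have hzero : pureMap A I M u = 0 := by
    rw [hmap]
    refine (QuotientAddGroup.eq_zero_iff (N := balancedRel A M A) _).mpr ?_
    have hgen : ((op a • (Submodule.Quotient.mk 1 : M)) ⊗ₜ[ℤ] (1 : A)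
        - (Submodule.Quotient.mk 1 : M) ⊗ₜ[ℤ] (a • (1 : A))) ∈ balancedRel A M A :=
      AddSubgroup.subset_closure ⟨Submodule.Quotient.mk 1, a, (1 : A), rfl⟩
    have h1 : (op a • (Submodule.Quotient.mk 1 : M) : M) = 0 := by
      show (Submodule.Quotient.mk (op a • (1 : A)) : M) = 0
      rw [Submodule.Quotient.mk_eq_zero]
      show (1 : A) * a ∈ Ra
      rw [one_mul]
      exact Submodule.mem_span_singleton_self a
    rw [h1, zero_tmul, zero_sub, smul_eq_mul, mul_one] at hgen
    exact (neg_mem_iff).mp hgen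
  have hu0 : u = 0 := hpure M (by rw [hzero, map_zero])
  have : ψ u = 0 := by rw [hu0, map_zero]
  have hψu : ψ u = QuotientAddGroup.mk a := by
    rw [hu, hψ]
    refine (QuotientAddGroup.lift_mk (balancedRel A M ↥I) (φ := Φ) hker2 _).trans ?_
    rw [hΦ_tmul, hg_mk, one_mul]
  rw [hψu, QuotientAddGroup.eq_zero_iff] at this
  obtain ⟨c, hc, hac⟩ := this
  exact ⟨c, hc, hac.symm⟩


/-- Common right units for pairs. -/
theorem exists_right_unit_pair (I : Ideal A)
    (hpure : ∀ (M : Type) [AddCommGroup M] [Module Aᵐᵒᵖ M],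
      Function.Injective (pureMap A I M))
    {a b : A} (ha : a ∈ I) (hb : b ∈ I) :
    ∃ e ∈ I, a * e = a ∧ b * e = b := by
  obtain ⟨e₁, he₁, hae₁⟩ := exists_right_unit A I hpure ha
  have hz : b - b * e₁ ∈ I := I.sub_mem hb (I.mul_mem_left b he₁)
  obtain ⟨e₂, he₂, hze₂⟩ := exists_right_unit A I hpure hz
  refine ⟨e₁ + e₂ - e₁ * e₂, I.sub_mem (I.add_mem he₁ he₂) (I.mul_mem_left e₁ he₂), ?_, ?_⟩
  · rw [mul_sub, mul_add, hae₁, ← mul_assoc, hae₁]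
    abel
  · rw [sub_mul] at hze₂
    rw [mul_sub, mul_add, ← mul_assoc, add_sub_assoc, hze₂]
    abel

/-- Every element of `M·I` admits a right unit in `I`. -/
theorem exists_right_unit_MI (I : Ideal A)
    (hright : ∀ a ∈ I, ∀ b : A, a * b ∈ I)
    (hpure : ∀ (M : Type) [AddCommGroup M] [Module Aᵐᵒᵖ M],
      Function.Injective (pureMap A I M))
    (M : Type) [AddCommGroup M] [Module Aᵐᵒᵖ M]
    {x : M} (hx : x ∈ Submodule.span Aᵐᵒᵖ {y : M | ∃ a ∈ I, ∃ m : M, y = op a • m}) :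
    ∃ e ∈ I, op e • x = x := by
  induction hx using Submodule.span_induction with
  | mem y hy =>
      obtain ⟨b, hb, m, rfl⟩ := hy
      obtain ⟨e, he, hbe⟩ := exists_right_unit A I hpure hb
      exact ⟨e, he, by rw [smul_smul, ← op_mul, hbe]⟩
  | zero => exact ⟨0, I.zero_mem, smul_zero _⟩
  | add x y hxm hym ihx ihy =>
      obtain ⟨e₁, he₁, h₁⟩ := ihx
      obtain ⟨e₂, he₂, h₂⟩ := ihy
      obtain ⟨e, he, hee₁, hee₂⟩ := exists_right_unit_pair A I hpure he₁ he₂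
      have hx' : op e • x = x := by
        conv_lhs => rw [← h₁]
        rw [smul_smul, ← op_mul, hee₁, h₁]
      have hy' : op e • y = y := by
        conv_lhs => rw [← h₂]
        rw [smul_smul, ← op_mul, hee₂, h₂]
      exact ⟨e, he, by rw [smul_add, hx', hy']⟩
  | smul c y hym ihy =>
      obtain ⟨e₁, he₁, h₁⟩ := ihy
      have hmem : e₁ * c.unop ∈ I := hright e₁ he₁ c.unop
      have hcy : c • y = op (e₁ * c.unop) • y := by
        conv_lhs => rw [← h₁]
        rw [smul_smul, op_mul, op_unop]
      obtain ⟨e, he, hbe⟩ := exists_right_unit A I hpure hmem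
      exact ⟨e, he, by rw [hcy, smul_smul, ← op_mul, hbe]⟩

/-- Descent of the module structure on a right `A`-module killed by `I` to `A/I`. -/
noncomputable def descModule (I : Ideal A) (hright : ∀ a ∈ I, ∀ b : A, a * b ∈ I)
    (Q : Type) [AddCommGroup Q] [Module Aᵐᵒᵖ Q]
    (hz : ∀ a ∈ I, ∀ q : Q, op a • q = 0) :
    Module (idealCon A I hright).Quotientᵐᵒᵖ Q :=
  letI : SMul (idealCon A I hright).Quotientᵐᵒᵖ Q :=
    ⟨fun b q => Quotient.liftOn (unop b) (fun a => op a • q) (fun a a' h => by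
      have hI : a - a' ∈ I := h
      have h0 : op (a - a') • q = 0 := hz _ hI q
      rw [op_sub, sub_smul, sub_eq_zero] at h0
      exact h0)⟩
  Function.Surjective.moduleLeft
    (RingHom.op ((idealCon A I hright).mk'))
    (fun b => ⟨op (Quotient.out (unop b)), by
      simp only [RingHom.op]
      show op (((idealCon A I hright).mk') (Quotient.out (unop b))) = b
      have : ((idealCon A I hright).mk') (Quotient.out (unop b)) = unop b := by
        show _ = unop b
        exact Quotient.out_eq (unop b)
      rw [this, op_unop]⟩)
    (fun c x => rfl)

theorem descModule_smul_mk (I : Ideal A) (hright : ∀ a ∈ I, ∀ b : A, a * b ∈ I)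
    (Q : Type) [AddCommGroup Q] [Module Aᵐᵒᵖ Q]
    (hz : ∀ a ∈ I, ∀ q : Q, op a • q = 0) (a : A) (q : Q) :
    letI := descModule A I hright Q hz
    (op ((idealCon A I hright).mk' a) : (idealCon A I hright).Quotientᵐᵒᵖ) • q = op a • q :=
  rfl

theorem ssring_op (I : Ideal A) (hright : ∀ a ∈ I, ∀ b : A, a * b ∈ I)
    (hss : IsSemisimpleModule (idealCon A I hright).Quotientᵐᵒᵖ
      (idealCon A I hright).Quotient) :
    IsSemisimpleRing (idealCon A I hright).Quotientᵐᵒᵖ := by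
  haveI := hss
  exact IsSemisimpleModule.congr
    ({ toFun := unop
       invFun := op
       left_inv := fun x => rfl
       right_inv := fun x => rfl
       map_add' := fun x y => rfl
       map_smul' := fun x y => rfl } :
      (idealCon A I hright).Quotientᵐᵒᵖ ≃ₗ[(idealCon A I hright).Quotientᵐᵒᵖ]
        (idealCon A I hright).Quotient)


set_option maxHeartbeats 1000000 in
/-- let `I` be a two-sided idempotent ideal of `A` with zero left
annihilator, such that `A/I` is flat as a left `A`-module (equivalently `I` is pure as a
left ideal: `I → A` stays injective after tensoring with every right `A`-module) and the
quotient ring `A/I` is semisimple.  Then `ann_M(I)` is a direct summand of `M` for every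
right `A`-module `M`. -/
theorem stmt_16 (I : Ideal A)
    (hright : ∀ a ∈ I, ∀ b : A, a * b ∈ I)
    (hidem : ∀ a ∈ I, a ∈ AddSubgroup.closure {x : A | ∃ b ∈ I, ∃ c ∈ I, x = b * c})
    (hlann : ∀ a : A, (∀ x ∈ I, a * x = 0) → a = 0)
    (hpure : ∀ (M : Type) [AddCommGroup M] [Module Aᵐᵒᵖ M],
      Function.Injective (pureMap A I M))
    (hss : IsSemisimpleModule (idealCon A I hright).Quotientᵐᵒᵖ
      (idealCon A I hright).Quotient) :
    ∀ (M : Type) [AddCommGroup M] [Module Aᵐᵒᵖ M],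
      ∃ N' : Submodule Aᵐᵒᵖ M, rAnn A I M ⊓ N' = ⊥ ∧ rAnn A I M ⊔ N' = ⊤ := by
  intro M _ _
  classical
  set MI : Submodule Aᵐᵒᵖ M :=
    Submodule.span Aᵐᵒᵖ {y : M | ∃ a ∈ I, ∃ m : M, y = op a • m} with hMI
  -- part (a) : ann ∩ MI = 0
  have parta : ∀ m : M, m ∈ rAnn A I M → m ∈ MI → m = 0 := by
    intro m hann hmi
    obtain ⟨e, he, hem⟩ := exists_right_unit_MI A I hright hpure M hmi
    have hann' : ∀ a ∈ I, op a • m = 0 := hann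
    rw [← hem, hann' e he]
  -- the quotient module Q = M / MI, as a module over (A/I)ᵐᵒᵖ
  have hz : ∀ a ∈ I, ∀ q : M ⧸ MI, op a • q = 0 := by
    intro a ha q
    obtain ⟨m, rfl⟩ := Submodule.Quotient.mk_surjective MI q
    rw [← Submodule.Quotient.mk_smul, Submodule.Quotient.mk_eq_zero]
    exact Submodule.subset_span ⟨a, ha, m, rfl⟩
  letI : Module (idealCon A I hright).Quotientᵐᵒᵖ (M ⧸ MI) := descModule A I hright _ hz
  haveI : IsSemisimpleRing (idealCon A I hright).Quotientᵐᵒᵖ := ssring_op A I hright hss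
  haveI : IsSemisimpleModule (idealCon A I hright).Quotientᵐᵒᵖ (M ⧸ MI) := inferInstance
  -- representatives for the action
  have hrep : ∀ (b : (idealCon A I hright).Quotientᵐᵒᵖ) (q : M ⧸ MI),
      ∃ a : A, b • q = op a • q := by
    intro b q
    induction b using MulOpposite.rec' with
    | h b =>
      induction b using Quotient.inductionOn with
      | h a => exact ⟨a, rfl⟩
  have hAB : ∀ (c : Aᵐᵒᵖ) (q : M ⧸ MI),
      c • q = (op ((idealCon A I hright).mk' c.unop) :
        (idealCon A I hright).Quotientᵐᵒᵖ) • q := fun c q => rfl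
  -- the image of the annihilator in Q, as an (A/I)ᵐᵒᵖ-submodule
  set AnnB : Submodule (idealCon A I hright).Quotientᵐᵒᵖ (M ⧸ MI) :=
    { carrier := MI.mkQ '' (rAnn A I M)
      add_mem' := by
        rintro x y ⟨m, hm, rfl⟩ ⟨n, hn, rfl⟩
        exact ⟨m + n, (rAnn A I M).add_mem hm hn, map_add _ _ _⟩
      zero_mem' := ⟨0, Submodule.zero_mem _, map_zero _⟩
      smul_mem' := by
        rintro b x ⟨m, hm, rfl⟩
        obtain ⟨a, hba⟩ := hrep b (MI.mkQ m)
        rw [hba]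
        exact ⟨op a • m, (rAnn A I M).smul_mem (op a) hm, (map_smul MI.mkQ (op a) m)⟩ }
    with hAnnB
  obtain ⟨C, hC⟩ := exists_isCompl AnnB
  -- restrict C back to an Aᵐᵒᵖ-submodule
  set Cres : Submodule Aᵐᵒᵖ (M ⧸ MI) :=
    { carrier := (C : Set (M ⧸ MI))
      add_mem' := fun hx hy => C.add_mem hx hy
      zero_mem' := C.zero_mem
      smul_mem' := by
        intro c q hq
        rw [hAB]
        exact C.smul_mem _ hq } with hCres
  refine ⟨Submodule.comap MI.mkQ Cres, ?_, ?_⟩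
  · rw [eq_bot_iff]
    rintro m ⟨hm1, hm2⟩
    have h1 : MI.mkQ m ∈ AnnB ⊓ C := ⟨⟨m, hm1, rfl⟩, hm2⟩
    rw [hC.inf_eq_bot, Submodule.mem_bot] at h1
    have h2 : m ∈ MI := by
      rwa [Submodule.mkQ_apply, Submodule.Quotient.mk_eq_zero] at h1
    show m ∈ (⊥ : Submodule Aᵐᵒᵖ M)
    rw [Submodule.mem_bot]
    exact parta m hm1 h2
  · rw [eq_top_iff]
    intro m _
    have h1 : MI.mkQ m ∈ AnnB ⊔ C := by rw [hC.sup_eq_top]; trivial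
    obtain ⟨y, hy, z, hz', hyz⟩ := Submodule.mem_sup.mp h1
    obtain ⟨n, hn, rfl⟩ := hy
    have hz2 : MI.mkQ (m - n) ∈ Cres := by
      have : MI.mkQ (m - n) = z := by
        rw [map_sub, ← hyz]; abel
      rw [this]; exact hz'
    exact Submodule.mem_sup.mpr ⟨n, hn, m - n, hz2, by abel⟩
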